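/- Let k be a field, n a natural number, V an n-dimensional k-vector space with basis (v_1,…,v_n), and M a k-vector space. For indices i,j let E_{ij} ∈ End_k(V) be the endomorphism with E_{ij}(v_j) = v_i and E_{ij}(v_l) = 0 for l ≠ j. Given a k-linear map μ : End_k(V) → End_k(M), define the k-linear map a : V⊗M → V⊗M by a(v_i ⊗ x) = Σ_{j=1}^n v_j ⊗ μ(E_{ij})(x). Then μ(XY − YX) = μ(X)μ(Y) − μ(Y)μ(X) holds for all X,Y ∈ End_k(V) (i.e., μ is a representation of the Lie algebra gl(V)) if and only if a satisfies the curried gl identity. -/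

import Mathlib

open TensorProduct

/-- The braiding of the first two factors of `V ⊗ V ⊗ M` (tensored with `id` on `M`). -/
noncomputable def glTau (k V M : Type) [CommRing k] [AddCommGroup V] [Module k V]
    [AddCommGroup M] [Module k M] :
    V ⊗[k] (V ⊗[k] M) →ₗ[k] V ⊗[k] (V ⊗[k] M) :=
  (TensorProduct.assoc k V V M).toLinearMap ∘ₗ
    LinearMap.rTensor M (TensorProduct.comm k V V).toLinearMap ∘ₗ
    (TensorProduct.assoc k V V M).symm.toLinearMap

/-- The curried gl identity for a map `a : V ⊗ M → V ⊗ M`: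
with `τ` the braiding of the two `V`-factors of `V ⊗ V ⊗ M`, `a₂ = id_V ⊗ a` and
`a₁ = τ ∘ a₂ ∘ τ`, it reads `a₁ ∘ a₂ - a₂ ∘ a₁ = τ ∘ (a₁ - a₂)`. -/
def CurriedGlIdentity (k V M : Type) [CommRing k] [AddCommGroup V] [Module k V]
    [AddCommGroup M] [Module k M] (a : V ⊗[k] M →ₗ[k] V ⊗[k] M) : Prop :=
  let τ : V ⊗[k] (V ⊗[k] M) →ₗ[k] V ⊗[k] (V ⊗[k] M) := glTau k V M
  let a₂ : V ⊗[k] (V ⊗[k] M) →ₗ[k] V ⊗[k] (V ⊗[k] M) := LinearMap.lTensor V a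
  let a₁ : V ⊗[k] (V ⊗[k] M) →ₗ[k] V ⊗[k] (V ⊗[k] M) := τ ∘ₗ a₂ ∘ₗ τ
  a₁ ∘ₗ a₂ - a₂ ∘ₗ a₁ = τ ∘ₗ (a₁ - a₂)


theorem glTau_tmul {k V M : Type} [CommRing k] [AddCommGroup V] [Module k V]
    [AddCommGroup M] [Module k M] (x y : V) (m : M) :
    (glTau k V M) (x ⊗ₜ (y ⊗ₜ m)) = y ⊗ₜ (x ⊗ₜ m) := by
  simp [glTau]

theorem sum_smul_comp {ι : Type} [Fintype ι] {k W : Type} [CommRing k] [AddCommGroup W]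
    [Module k W] (c d : ι → k) (F G : ι → (W →ₗ[k] W)) :
    (∑ p, c p • F p) ∘ₗ (∑ q, d q • G q) = ∑ p, ∑ q, (c p * d q) • (F p ∘ₗ G q) := by
  rw [← Module.End.mul_eq_comp, Finset.sum_mul_sum]
  simp [smul_mul_assoc, mul_smul_comm, smul_smul, Module.End.mul_eq_comp, mul_comm]

section aux2
variable {k : Type} [Field k] {n : ℕ} {V M : Type} [AddCommGroup V] [Module k V]
    [AddCommGroup M] [Module k M] (v : Module.Basis (Fin n) k V)
    (E : Fin n → Fin n → (V →ₗ[k] V))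

theorem E_apply (hE : ∀ i j, E i j = (v.coord j).smulRight (v i)) (i j l : Fin n) :
    E i j (v l) = if l = j then v i else 0 := by
  rw [hE]
  simp [Module.Basis.coord_apply, Finsupp.single_apply]

theorem expandX (hE : ∀ i j, E i j = (v.coord j).smulRight (v i)) (X : V →ₗ[k] V) :
    X = ∑ p : Fin n × Fin n, (v.repr (X (v p.2)) p.1) • E p.1 p.2 := by
  apply Module.Basis.ext v
  intro l
  rw [Fintype.sum_prod_type]
  simp only [LinearMap.sum_apply, LinearMap.smul_apply, E_apply v E hE]
  simp [Finset.sum_ite_eq, Module.Basis.sum_repr]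

theorem rep_of_basis (μ : (V →ₗ[k] V) →ₗ[k] (M →ₗ[k] M))
    (hE : ∀ i j, E i j = (v.coord j).smulRight (v i))
    (h : ∀ i m j l, μ (E i m ∘ₗ E j l - E j l ∘ₗ E i m) =
      μ (E i m) ∘ₗ μ (E j l) - μ (E j l) ∘ₗ μ (E i m))
    (X Y : V →ₗ[k] V) :
    μ (X ∘ₗ Y - Y ∘ₗ X) = μ X ∘ₗ μ Y - μ Y ∘ₗ μ X := by
  obtain ⟨c, hc⟩ : ∃ c : Fin n × Fin n → k, X = ∑ p, c p • E p.1 p.2 :=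
    ⟨_, expandX v E hE X⟩
  obtain ⟨d, hd⟩ : ∃ d : Fin n × Fin n → k, Y = ∑ p, d p • E p.1 p.2 :=
    ⟨_, expandX v E hE Y⟩
  subst hc hd
  have h' : ∀ p q : Fin n × Fin n,
      μ (E p.1 p.2 ∘ₗ E q.1 q.2) - μ (E q.1 q.2 ∘ₗ E p.1 p.2) =
      μ (E p.1 p.2) ∘ₗ μ (E q.1 q.2) - μ (E q.1 q.2) ∘ₗ μ (E p.1 p.2) := by
    intro p q
    rw [← map_sub]
    exact h p.1 p.2 q.1 q.2
  rw [map_sub, sum_smul_comp, sum_smul_comp]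
  simp only [map_sum, map_smul]
  rw [sum_smul_comp c d (fun p => μ (E p.1 p.2)) (fun p => μ (E p.1 p.2)),
      sum_smul_comp d c (fun p => μ (E p.1 p.2)) (fun p => μ (E p.1 p.2))]
  have hswap : ∑ p : Fin n × Fin n, ∑ q : Fin n × Fin n, (d p * c q) • μ (E p.1 p.2 ∘ₗ E q.1 q.2)
      = ∑ p : Fin n × Fin n, ∑ q : Fin n × Fin n, (d q * c p) • μ (E q.1 q.2 ∘ₗ E p.1 p.2) :=
    Finset.sum_comm
  have hswap2 : ∑ p : Fin n × Fin n, ∑ q : Fin n × Fin n,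
        (d p * c q) • (μ (E p.1 p.2) ∘ₗ μ (E q.1 q.2))
      = ∑ p : Fin n × Fin n, ∑ q : Fin n × Fin n,
        (d q * c p) • (μ (E q.1 q.2) ∘ₗ μ (E p.1 p.2)) :=
    Finset.sum_comm
  rw [hswap, hswap2]
  simp only [map_sum, map_smul, ← Finset.sum_sub_distrib]
  apply Finset.sum_congr rfl; intro p _
  apply Finset.sum_congr rfl; intro q _
  rw [mul_comm (d q) (c p), ← smul_sub, ← smul_sub, h' p q]
end aux2

section aux
variable {k : Type} [Field k] {n : ℕ} {V M : Type} [AddCommGroup V] [Module k V]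
    [AddCommGroup M] [Module k M] (v : Module.Basis (Fin n) k V)

/-- coefficient-extraction map -/
noncomputable def glPhi (m l : Fin n) : V ⊗[k] (V ⊗[k] M) →ₗ[k] M :=
  ((TensorProduct.lid k M).toLinearMap ∘ₗ LinearMap.rTensor M (v.coord m)) ∘ₗ
    LinearMap.lTensor V
      ((TensorProduct.lid k M).toLinearMap ∘ₗ LinearMap.rTensor M (v.coord l))

theorem glPhi_tmul (m l q o : Fin n) (w : M) :
    glPhi v m l (v q ⊗ₜ (v o ⊗ₜ w)) =
      if q = m then (if o = l then w else 0) else 0 := by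
  simp [glPhi, Module.Basis.coord_apply, Finsupp.single_apply, ite_smul, smul_ite]
  split_ifs <;> rfl

theorem extb {N P : Type} [AddCommGroup N] [Module k N] [AddCommGroup P] [Module k P]
    {f g : V ⊗[k] N →ₗ[k] P} (h : ∀ i y, f (v i ⊗ₜ y) = g (v i ⊗ₜ y)) : f = g := by
  apply TensorProduct.ext
  apply Module.Basis.ext v
  intro i
  ext y
  exact h i y

theorem extb2 {P : Type} [AddCommGroup P] [Module k P]
    {f g : V ⊗[k] (V ⊗[k] M) →ₗ[k] P}
    (h : ∀ i j x, f (v i ⊗ₜ (v j ⊗ₜ x)) = g (v i ⊗ₜ (v j ⊗ₜ x))) : f = g := by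
  apply extb v
  intro i y
  exact LinearMap.congr_fun
    (extb v (f := f ∘ₗ TensorProduct.mk k V (V ⊗[k] M) (v i))
      (g := g ∘ₗ TensorProduct.mk k V (V ⊗[k] M) (v i)) (fun j x => h i j x)) y

variable (E : Fin n → Fin n → (V →ₗ[k] V))

theorem E_comp (hE : ∀ i j, E i j = (v.coord j).smulRight (v i)) (i m j l : Fin n) :
    E i m ∘ₗ E j l = if m = j then E i l else 0 := by
  rcases eq_or_ne m j with h | h
  · subst h
    rw [if_pos rfl]
    ext w
    simp [hE, Module.Basis.coord_apply, Module.Basis.repr_self, smul_smul]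
  · rw [if_neg h]
    ext w
    simp [hE, Module.Basis.coord_apply, Module.Basis.repr_self, Finsupp.single_apply, Ne.symm h]

theorem mu_comm_E (μ : (V →ₗ[k] V) →ₗ[k] (M →ₗ[k] M))
    (hE : ∀ i j, E i j = (v.coord j).smulRight (v i)) (i m j l : Fin n) :
    μ (E i m ∘ₗ E j l - E j l ∘ₗ E i m) =
      (if j = m then μ (E i l) else 0) - (if i = l then μ (E j m) else 0) := by
  rw [map_sub, E_comp v E hE, E_comp v E hE]
  congr 1
  · rcases eq_or_ne m j with h | h
    · subst h; simp
    · rw [if_neg h, if_neg (Ne.symm h), map_zero]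
  · rcases eq_or_ne l i with h | h
    · subst h; simp
    · rw [if_neg h, if_neg (Ne.symm h), map_zero]

theorem curried_iff_bracket (μ : (V →ₗ[k] V) →ₗ[k] (M →ₗ[k] M))
    (hE : ∀ i j, E i j = (v.coord j).smulRight (v i))
    (a : V ⊗[k] M →ₗ[k] V ⊗[k] M)
    (ha : ∀ (i : Fin n) (x : M), a ((v i) ⊗ₜ[k] x) = ∑ j, (v j) ⊗ₜ[k] (μ (E i j)) x) :
    ((glTau k V M ∘ₗ LinearMap.lTensor V a ∘ₗ glTau k V M) ∘ₗ LinearMap.lTensor V a -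
        LinearMap.lTensor V a ∘ₗ (glTau k V M ∘ₗ LinearMap.lTensor V a ∘ₗ glTau k V M) =
      glTau k V M ∘ₗ
        ((glTau k V M ∘ₗ LinearMap.lTensor V a ∘ₗ glTau k V M) - LinearMap.lTensor V a)) ↔
    (∀ i m j l, μ (E i m) ∘ₗ μ (E j l) - μ (E j l) ∘ₗ μ (E i m) =
      (if j = m then μ (E i l) else 0) - (if i = l then μ (E j m) else 0)) := by
  have ha2 : ∀ (y : V) (j : Fin n) (x : M),
      (LinearMap.lTensor V a) (y ⊗ₜ (v j ⊗ₜ x)) = ∑ l, y ⊗ₜ (v l ⊗ₜ μ (E j l) x) := by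
    intro y j x
    rw [LinearMap.lTensor_tmul, ha, tmul_sum]
  have ha1 : ∀ (i : Fin n) (y : V) (x : M),
      (glTau k V M ∘ₗ LinearMap.lTensor V a ∘ₗ glTau k V M) (v i ⊗ₜ (y ⊗ₜ x)) =
        ∑ l, v l ⊗ₜ (y ⊗ₜ μ (E i l) x) := by
    intro i y x
    simp only [LinearMap.comp_apply, glTau_tmul, ha2, map_sum, glTau_tmul]
  have hL : ∀ (i j : Fin n) (x : M),
      ((glTau k V M ∘ₗ LinearMap.lTensor V a ∘ₗ glTau k V M) ∘ₗ LinearMap.lTensor V a -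
        LinearMap.lTensor V a ∘ₗ (glTau k V M ∘ₗ LinearMap.lTensor V a ∘ₗ glTau k V M))
        (v i ⊗ₜ (v j ⊗ₜ x)) =
      ∑ o, ∑ q, v q ⊗ₜ (v o ⊗ₜ (μ (E i q)) ((μ (E j o)) x)) -
        ∑ o, ∑ q, v q ⊗ₜ (v o ⊗ₜ (μ (E j o)) ((μ (E i q)) x)) := by
    intro i j x
    simp only [LinearMap.sub_apply, LinearMap.comp_apply, ha2, map_sum, glTau_tmul]
    exact congrArg₂ (· - ·) rfl Finset.sum_comm
  have hR : ∀ (i j : Fin n) (x : M),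
      (glTau k V M ∘ₗ
        ((glTau k V M ∘ₗ LinearMap.lTensor V a ∘ₗ glTau k V M) - LinearMap.lTensor V a))
        (v i ⊗ₜ (v j ⊗ₜ x)) =
      ∑ o, v j ⊗ₜ (v o ⊗ₜ (μ (E i o)) x) - ∑ o, v o ⊗ₜ (v i ⊗ₜ (μ (E j o)) x) := by
    intro i j x
    simp only [LinearMap.sub_apply, LinearMap.comp_apply, map_sub, ha2, map_sum, glTau_tmul]
  constructor
  · intro hcgi i m j l
    ext x
    have h1 := congrArg (glPhi v m l) (LinearMap.congr_fun hcgi (v i ⊗ₜ (v j ⊗ₜ x)))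
    rw [hL, hR] at h1
    simp only [map_sub, map_sum, glPhi_tmul] at h1
    by_cases hjm : j = m <;> by_cases hil : i = l <;>
      simp [hjm, hil, Finset.sum_ite_eq, Finset.sum_ite_eq', Finset.mem_univ] at h1 ⊢ <;>
      exact h1
  · intro hQ
    apply extb2 v
    intro i j x
    rw [hL, hR]
    have hPx : ∀ q o : Fin n,
        (μ (E i q)) ((μ (E j o)) x) - (μ (E j o)) ((μ (E i q)) x) =
        (if j = q then (μ (E i o)) x else 0) - (if i = o then (μ (E j q)) x else 0) := by
      intro q o
      have := LinearMap.congr_fun (hQ i q j o) x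
      simpa [apply_ite (fun f : M →ₗ[k] M => f x)] using this
    rw [← Finset.sum_sub_distrib]
    simp only [← Finset.sum_sub_distrib, ← tmul_sub, hPx]
    simp only [tmul_sub, tmul_ite, tmul_zero, Finset.sum_sub_distrib]
    congr 1
    · simp [Finset.sum_ite_eq, Finset.mem_univ]
    · rw [Finset.sum_comm]
      simp [Finset.sum_ite_eq, Finset.mem_univ]

end aux

/-- Let `V` be an `n`-dimensional `k`-vector space with basis `v`, and `M` a
`k`-vector space. For a linear map `μ : End(V) → End(M)`, let
`a : V ⊗ M → V ⊗ M` be the linear map with `a (vᵢ ⊗ x) = ∑ⱼ vⱼ ⊗ μ(Eᵢⱼ) x`, where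
`Eᵢⱼ ∈ End(V)` is the endomorphism with `Eᵢⱼ vⱼ = vᵢ` and `Eᵢⱼ vₗ = 0` for `l ≠ j`.
Then `μ` is a representation of the Lie algebra `gl(V)`
(i.e. `μ(XY - YX) = μ(X)μ(Y) - μ(Y)μ(X)` for all `X, Y`) if and only if `a` satisfies
the curried gl identity. -/
theorem statement0 (k : Type) [Field k] (n : ℕ) (V M : Type) [AddCommGroup V] [Module k V]
    [AddCommGroup M] [Module k M] (v : Module.Basis (Fin n) k V)
    (μ : (V →ₗ[k] V) →ₗ[k] (M →ₗ[k] M))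
    (E : Fin n → Fin n → (V →ₗ[k] V))
    (hE : ∀ i j, E i j = (v.coord j).smulRight (v i))
    (a : V ⊗[k] M →ₗ[k] V ⊗[k] M)
    (ha : ∀ (i : Fin n) (x : M), a ((v i) ⊗ₜ[k] x) = ∑ j : Fin n, (v j) ⊗ₜ[k] (μ (E i j)) x) :
    (∀ X Y : V →ₗ[k] V, μ (X ∘ₗ Y - Y ∘ₗ X) = μ X ∘ₗ μ Y - μ Y ∘ₗ μ X) ↔
      CurriedGlIdentity k V M a := by
  rw [show CurriedGlIdentity k V M a ↔
      ((glTau k V M ∘ₗ LinearMap.lTensor V a ∘ₗ glTau k V M) ∘ₗ LinearMap.lTensor V a -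
        LinearMap.lTensor V a ∘ₗ (glTau k V M ∘ₗ LinearMap.lTensor V a ∘ₗ glTau k V M) =
      glTau k V M ∘ₗ
        ((glTau k V M ∘ₗ LinearMap.lTensor V a ∘ₗ glTau k V M) - LinearMap.lTensor V a))
    from Iff.rfl]
  rw [curried_iff_bracket v E μ hE a ha]
  constructor
  · intro hrep i m j l
    rw [← hrep (E i m) (E j l), mu_comm_E v E μ hE]
  · intro hQ
    apply rep_of_basis v E μ hE
    intro i m j l
    rw [mu_comm_E v E μ hE]
    exact (hQ i m j l).symm
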